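/- arXiv:2005.04252 — 3 statements merged into one kernel-verified Lean document; each statement's English description precedes it below -/
import Mathlib

section
/- Let M be a matroid on a finite ground set E, let ℓ : E → ℝ be generic, and let B₁ be the basis of M with the strictly smallest ℓ-weight. Then for every basis B of M, the set difference B \ B₁ is contained in the internally passive set IP_{<_ℓ}(B), where <_ℓ is the linear order on E induced by ℓ. (Lemma 6.4 (lem:LasVergnas), after Las Vergnas, Proposition 2.5.) -/
/-!
STATEMENT 9 (Lemma `lem:LasVergnas`, after Las Vergnas Prop. 2.5): if `B₁` is
the basis of strictly smallest `ℓ`-weight for a generic `ℓ`, then for every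
basis `B` one has `B \ B₁ ⊆ IP_{<ℓ}(B)`.
-/

open scoped BigOperators

/-- The `ℓ`-weight of a set `A ⊆ E`. -/
noncomputable def wt {α : Type*} (ℓ : α → ℝ) (A : Set α) : ℝ := ∑ᶠ e ∈ A, ℓ e

/-- `ℓ` is generic for `M`. -/
def Generic {α : Type*} (M : Matroid α) (ℓ : α → ℝ) : Prop :=
  Function.Injective ℓ ∧
    ∀ ⦃B B' : Set α⦄, M.IsBase B → M.IsBase B' → B ≠ B' → wt ℓ B ≠ wt ℓ B'

/-- The internally passive set of a basis `B` with respect to a strict order `lt`. -/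
def IP {α : Type*} (M : Matroid α) (lt : α → α → Prop) (B : Set α) : Set α :=
  {b | b ∈ B ∧ ∃ b', b' ∉ B ∧ lt b' b ∧ M.IsBase (insert b' (B \ {b}))}

lemma wt_exchange {α : Type*} [Fintype α] (ℓ : α → ℝ) {B : Set α} {b c : α}
    (hb : b ∉ B) (hc : c ∈ B) :
    wt ℓ (insert b (B \ {c})) = wt ℓ B + ℓ b - ℓ c := by
  classical
  rw [wt, wt, finsum_mem_eq_finite_toFinset_sum ℓ (Set.toFinite _),
      finsum_mem_eq_finite_toFinset_sum ℓ (Set.toFinite _)]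
  have hbc : b ≠ c := by rintro rfl; exact hb hc
  have hset : (Set.toFinite (insert b (B \ {c}))).toFinset
      = insert b ((Set.toFinite B).toFinset.erase c) := by
    ext x
    simp only [Set.Finite.mem_toFinset, Set.mem_insert_iff, Set.mem_diff,
      Set.mem_singleton_iff, Finset.mem_insert, Finset.mem_erase]
    tauto
  rw [hset, Finset.sum_insert (fun h => hb (Set.Finite.mem_toFinset _ |>.mp (Finset.mem_of_mem_erase h))),
      Finset.sum_erase_eq_sub (by simpa using hc)]
  ring

theorem diff_min_basis_subset_IP {α : Type*} [Fintype α]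
    (M : Matroid α) (hE : M.E = Set.univ)
    (ℓ : α → ℝ) (hgen : Generic M ℓ)
    (B₁ : Set α) (hB₁ : M.IsBase B₁)
    (hmin : ∀ C : Set α, M.IsBase C → C ≠ B₁ → wt ℓ B₁ < wt ℓ C) :
    ∀ B : Set α, M.IsBase B → B \ B₁ ⊆ IP M (fun x y => ℓ x < ℓ y) B := by
  classical
  intro B hB b hb
  obtain ⟨hbB, hbB₁⟩ := hb
  set S : Set α := {c | c ∈ B₁ ∧ M.IsBase (insert b (B₁ \ {c}))} with hSdef
  -- every element of S is ℓ-smaller than b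
  have hlt : ∀ c ∈ S, ℓ c < ℓ b := by
    rintro c ⟨hcB₁, hc⟩
    have hne : insert b (B₁ \ {c}) ≠ B₁ := by
      intro h; exact hbB₁ (h ▸ Set.mem_insert b _)
    have h := hmin _ hc hne
    rw [wt_exchange ℓ hbB₁ hcB₁] at h
    linarith
  -- b is in the closure of S
  have hbE : b ∈ M.E := by rw [hE]; trivial
  have hSB₁ : S ⊆ B₁ := fun c hc => hc.1
  have hbcl : b ∈ M.closure S := by
    by_contra hbS
    have hSind : M.Indep S := hB₁.indep.subset hSB₁
    have hins : M.Indep (insert b S) := ((hSind.notMem_closure_iff hbE).mp hbS).1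
    obtain ⟨J, hJ, hJsub⟩ := hins.subset_isBasis_of_subset
      (Set.insert_subset_insert hSB₁) (by rw [hE]; exact Set.subset_univ _)
    have hJbase : M.IsBase J := hB₁.isBase_of_isBasis_superset (Set.subset_insert b B₁) hJ
    have hbJ : b ∈ J := hJsub (Set.mem_insert b S)
    have hSJ : S ⊆ J := fun x hx => hJsub (Set.mem_insert_of_mem _ hx)
    have hJsub' : J ⊆ insert b B₁ := hJ.subset
    have hdiff : J \ B₁ = {b} := by
      apply Set.Subset.antisymm
      · rintro x ⟨hxJ, hxB₁⟩
        rcases hJsub' hxJ with h | h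
        · exact h
        · exact absurd h hxB₁
      · rintro x rfl; exact ⟨hbJ, hbB₁⟩
    have hcard : (B₁ \ J).encard = 1 := by
      rw [hB₁.encard_diff_comm hJbase, hdiff, Set.encard_singleton]
    obtain ⟨c, hc⟩ := Set.encard_eq_one.mp hcard
    have hcB₁ : c ∈ B₁ := (hc ▸ Set.mem_singleton c : c ∈ B₁ \ J).1
    have hcJ : c ∉ J := (hc ▸ Set.mem_singleton c : c ∈ B₁ \ J).2
    have hJeq : J = insert b (B₁ \ {c}) := by
      ext x
      constructor
      · intro hxJ
        rcases hJsub' hxJ with h | h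
        · exact Or.inl h
        · refine Or.inr ⟨h, ?_⟩
          rintro rfl; exact hcJ hxJ
      · rintro (rfl | ⟨hxB₁, hxc⟩)
        · exact hbJ
        · by_contra hxJ
          have : x ∈ B₁ \ J := ⟨hxB₁, hxJ⟩
          rw [hc] at this
          exact hxc this
    have hcS : c ∈ S := ⟨hcB₁, hJeq ▸ hJbase⟩
    exact hcJ (hSJ hcS)
  -- some element of S is outside the closure of B \ {b}
  have hBd : M.Indep (B \ {b}) := hB.indep.subset Set.diff_subset
  have hnot : ¬ S ⊆ M.closure (B \ {b}) := by
    intro hsub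
    have h1 : M.closure S ⊆ M.closure (B \ {b}) :=
      Matroid.closure_subset_closure_of_subset_closure hsub
    exact (hB.indep.notMem_closure_diff_of_mem hbB) (h1 hbcl)
  obtain ⟨c, hcS, hcncl⟩ := Set.not_subset.mp hnot
  have hcE : c ∈ M.E := by rw [hE]; trivial
  have hcb : c ≠ b := by
    intro h; exact lt_irrefl _ (h ▸ hlt c hcS)
  have hcB : c ∉ B := by
    intro hcB
    exact hcncl (M.subset_closure _ (by rw [hE]; exact Set.subset_univ _) ⟨hcB, hcb⟩)
  have hind : M.Indep (insert c (B \ {b})) :=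
    ((hBd.notMem_closure_iff hcE).mp hcncl).1
  exact ⟨hbB, c, hcB, hlt c hcS, hB.exchange_isBase_of_indep hcB hind⟩
end

section
/- Let M be a matroid on a finite ground set E and let B₁, …, Bₙ be a pinned broken line shelling of the bases of M. Then for every index i, the restriction set R(B_i) contains B_i \ B₁; equivalently, for every element e ∉ B₁ one has e ∈ R(B_i) if and only if e ∈ B_i, i.e., R(B_i) \ B₁ = B_i \ B₁. (Lemma 6.7 (lem:coveredAtoms), second part: the atoms below a basis B in the restriction set poset correspond exactly to the elements of B \ B₁.) -/
/-!
STATEMENT 12 (Lemma `lem:coveredAtoms`, second part): in a pinned broken line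
shelling `B₁, …, Bₙ` of the bases of `M`, for every index `i` the restriction
set `R(Bᵢ)` contains `Bᵢ \ B₁`; equivalently `R(Bᵢ) \ B₁ = Bᵢ \ B₁`.
-/

open scoped BigOperators

/-- `B` enumerates (without repetition) all the bases of `M`. -/
def EnumeratesBases {α : Type*} (M : Matroid α) {n : ℕ} (B : Fin n → Set α) : Prop :=
  Function.Injective B ∧ (∀ i, M.IsBase (B i)) ∧ ∀ C, M.IsBase C → ∃ i, B i = C

/-- The restriction set of the facet `F j` in the enumeration `F`. -/
def restrictionSet {α : Type*} {n : ℕ} (F : Fin n → Set α) (j : Fin n) : Set α :=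
  {x | x ∈ F j ∧ ∃ i : Fin n, i < j ∧ F j \ {x} ⊆ F i}

lemma wt_eq_sum_toFinset {α : Type*} [Fintype α] (ℓ : α → ℝ) (A : Set α) :
    wt ℓ A = ∑ a ∈ A.toFinite.toFinset, ℓ a := by
  classical
  rw [wt, ← finsum_mem_coe_finset, Set.Finite.coe_toFinset]

lemma wt_exchange_s12 {α : Type*} [Fintype α] (ℓ : α → ℝ) {A : Set α} {e f : α}
    (he : e ∈ A) (hf : f ∉ A) :
    wt ℓ (insert f (A \ {e})) = wt ℓ A - ℓ e + ℓ f := by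
  classical
  rw [wt_eq_sum_toFinset, wt_eq_sum_toFinset]
  have h1 : (insert f (A \ {e})).toFinite.toFinset = insert f (A.toFinite.toFinset.erase e) := by
    ext x
    simp only [Set.Finite.mem_toFinset, Set.mem_insert_iff, Set.mem_diff,
      Set.mem_singleton_iff, Finset.mem_insert, Finset.mem_erase]
    tauto
  rw [h1, Finset.sum_insert (by
      simp only [Finset.mem_erase, Set.Finite.mem_toFinset]
      exact fun h => hf h.2),
    Finset.sum_erase_eq_sub (by simpa using he)]
  ring

/-- Strong (symmetric) basis exchange, proved via closures. -/
lemma strong_exchange {α : Type*} [Fintype α] {M : Matroid α} (hE : M.E = Set.univ)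
    {A B0 : Set α} (hA : M.IsBase A) (hB0 : M.IsBase B0) {e : α} (heA : e ∈ A) (heB0 : e ∉ B0) :
    ∃ f ∈ B0, f ∉ A ∧ M.IsBase (insert f (A \ {e})) ∧ M.IsBase (insert e (B0 \ {f})) := by
  classical
  set I : Set α := A \ {e} with hIdef
  have hI : M.Indep I := hA.indep.subset Set.diff_subset
  have hAeq : insert e I = A := by
    rw [hIdef, Set.insert_diff_singleton, Set.insert_eq_self.2 heA]
  have heI : e ∉ I := by simp [hIdef]
  have hecl : e ∉ M.closure I := by
    have := (hI.insert_indep_iff_of_notMem heI).1 (hAeq ▸ hA.indep)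
    exact this.2
  -- pick a minimal finset J ⊆ B0 with e ∈ closure J
  obtain ⟨J, hJmem, hJmin⟩ :=
    Finset.exists_min_image
      ((Finset.univ : Finset (Finset α)).filter
        (fun (J : Finset α) => (J : Set α) ⊆ B0 ∧ e ∈ M.closure (J : Set α)))
      Finset.card
      ⟨B0.toFinite.toFinset, by
        simp only [Finset.mem_filter, Finset.mem_univ, true_and, Set.Finite.coe_toFinset]
        exact ⟨subset_rfl, by rw [hB0.closure_eq, hE]; trivial⟩⟩
  simp only [Finset.mem_filter, Finset.mem_univ, true_and] at hJmem
  obtain ⟨hJB0, heJ⟩ := hJmem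
  -- there is f ∈ J with f ∉ closure I
  have hJne : ¬ (↑J : Set α) ⊆ M.closure I := by
    intro h
    exact hecl (by
      have := M.closure_subset_closure h
      rw [M.closure_closure] at this
      exact this heJ)
  obtain ⟨f, hfJ, hfcl⟩ : ∃ f ∈ J, f ∉ M.closure I := by
    by_contra h; push_neg at h; exact hJne (fun x hx => h x (by simpa using hx))
  have hfB0 : f ∈ B0 := hJB0 hfJ
  have hfI : f ∉ I := fun h => hfcl (M.subset_closure I (by rw [hE]; exact Set.subset_univ _) h)
  have hfe : f ≠ e := fun h => heB0 (h ▸ hfB0)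
  have hfA : f ∉ A := by
    rw [← hAeq]; simp [hfe, hfI]
  -- minimality: e ∉ closure (J \ {f})
  have heJf : e ∉ M.closure (↑(J.erase f) : Set α) := by
    intro hcon
    have hcard := hJmin (J.erase f) (by
      simp only [Finset.mem_filter, Finset.mem_univ, true_and]
      exact ⟨(Finset.coe_subset.2 (Finset.erase_subset f J)).trans hJB0, hcon⟩)
    have := Finset.card_erase_lt_of_mem hfJ
    omega
  -- closure exchange: f ∈ closure (insert e (J \ {f}))
  have hfex : f ∈ M.closure (insert e (↑(J.erase f) : Set α)) := by
    have h1 : e ∈ M.closure (insert f (↑(J.erase f) : Set α)) \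
        M.closure (↑(J.erase f) : Set α) := by
      constructor
      · have : insert f (↑(J.erase f) : Set α) = ↑J := by
          ext x; by_cases hx : x = f <;> simp [hx, hfJ, Finset.mem_erase]
        rw [this]; exact heJ
      · exact heJf
    exact (Matroid.closure_exchange h1).1
  -- e ∉ closure (B0 \ {f})
  have heB0f : e ∉ M.closure (B0 \ {f}) := by
    intro hcon
    have hsub : insert e (↑(J.erase f) : Set α) ⊆ insert e (B0 \ {f}) := by
      apply Set.insert_subset_insert
      intro x hx
      simp only [Finset.coe_erase, Set.mem_diff, Set.mem_singleton_iff] at hx ⊢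
      exact ⟨hJB0 hx.1, hx.2⟩
    have h2 : f ∈ M.closure (insert e (B0 \ {f})) :=
      M.closure_subset_closure hsub hfex
    rw [Matroid.closure_insert_eq_of_mem_closure hcon] at h2
    have hB0fI : M.Indep (B0 \ {f}) := hB0.indep.subset Set.diff_subset
    have : M.Dep (insert f (B0 \ {f})) :=
      hB0fI.insert_dep_iff.2 ⟨h2, by simp⟩
    rw [Set.insert_diff_singleton, Set.insert_eq_self.2 hfB0] at this
    exact this.not_indep hB0.indep
  -- both exchanged sets are bases
  have hbase1 : M.IsBase (insert f I) := by
    apply hA.exchange_isBase_of_indep hfA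
    rw [hI.insert_indep_iff_of_notMem hfI]
    exact ⟨by rw [hE]; trivial, hfcl⟩
  have hbase2 : M.IsBase (insert e (B0 \ {f})) := by
    apply hB0.exchange_isBase_of_indep heB0
    have hB0fI : M.Indep (B0 \ {f}) := hB0.indep.subset Set.diff_subset
    rw [hB0fI.insert_indep_iff_of_notMem (by simp [heB0])]
    exact ⟨by rw [hE]; trivial, heB0f⟩
  exact ⟨f, hfB0, hfA, hbase1, hbase2⟩

theorem pinned_broken_line_restriction_contains_diff {α : Type*} [Fintype α]
    (M : Matroid α) (hE : M.E = Set.univ)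
    {n : ℕ} (hn : 0 < n) (B : Fin n → Set α) (hB : EnumeratesBases M B)
    (ℓ : Fin n → α → ℝ) (hgen : ∀ i, Generic M (ℓ i))
    (hwit : ∀ i j : Fin n, wt (ℓ i) (B j) < wt (ℓ i) (B i) ↔ j < i)
    (hpin : ∀ i : Fin n, ∀ C : Set α, M.IsBase C → C ≠ B ⟨0, hn⟩ →
      wt (ℓ i) (B ⟨0, hn⟩) < wt (ℓ i) C) :
    ∀ i : Fin n, B i \ B ⟨0, hn⟩ ⊆ restrictionSet B i ∧
      restrictionSet B i \ B ⟨0, hn⟩ = B i \ B ⟨0, hn⟩ := by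
  intro i
  set B0 := B ⟨0, hn⟩ with hB0def
  have hsub : B i \ B0 ⊆ restrictionSet B i := by
    intro e he
    obtain ⟨heA, heB0⟩ := he
    obtain ⟨f, hfB0, hfA, hbase1, hbase2⟩ :=
      strong_exchange hE (hB.2.1 i) (hB.2.1 ⟨0, hn⟩) heA heB0
    -- ℓ i f < ℓ i e from pinnedness
    have hne2 : insert e (B0 \ {f}) ≠ B0 := by
      intro h
      exact heB0 (h ▸ Set.mem_insert e _)
    have hlt := hpin i _ hbase2 hne2
    rw [wt_exchange_s12 (ℓ i) hfB0 heB0] at hlt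
    have hfe : ℓ i f < ℓ i e := by linarith
    -- so the exchanged basis has smaller weight
    have hwlt : wt (ℓ i) (insert f (B i \ {e})) < wt (ℓ i) (B i) := by
      rw [wt_exchange_s12 (ℓ i) heA hfA]; linarith
    obtain ⟨j, hj⟩ := hB.2.2 _ hbase1
    have hji : j < i := (hwit i j).1 (by rw [hj]; exact hwlt)
    exact ⟨heA, j, hji, by rw [hj]; exact Set.subset_insert _ _⟩
  refine ⟨hsub, ?_⟩
  apply Set.Subset.antisymm
  · intro x hx
    exact ⟨hx.1.1, hx.2⟩
  · intro x hx
    exact ⟨hsub hx, hx.2⟩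
end

section
/- Let M be a matroid of rank r on a finite ground set E and let B₁, …, Bₙ be a pinned broken line shelling of the bases of M with first basis B := B₁. Let I be an independent set of M with I ∩ B = ∅ and let j ≥ 0. Then the number of bases B' of M satisfying B' \ B = I and |R(B')| = |I| + j equals h_j((M/I)|_B), the j-th h-number of the matroid obtained from M by contracting I and then restricting to the ground set B. (Lemma of Section 7: pinned broken line shellings witness the h-vector decomposition of Klee–Samper.) -/
/-!
STATEMENT 13 (Lemma of Section 7): for a pinned broken line shelling of a rank
`r` matroid `M` with first basis `B`, and an independent set `I` disjoint from
`B`, the number of bases `B'` with `B' \ B = I` and `|R(B')| = |I| + j` equals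
the `j`-th `h`-number of `(M/I)|_B` (contraction of `I`, restricted to `B`).

Since `I` is independent and disjoint from `B`, a set `S ⊆ B` is independent in
`(M/I)|_B` iff `S ∪ I` is independent in `M`; the `f`- and `h`-numbers of
`(M/I)|_B` are expressed accordingly, with `rank (M/I)|_B = r - |I|`.
-/

open scoped BigOperators

/-- `f_{k-1}((M/I)|_B)`: the number of independent sets of cardinality `k` of
the matroid obtained from `M` by contracting the independent set `I` (disjoint
from `B`) and restricting to `B`; these are the `S ⊆ B` with `S ∪ I`
independent in `M`. -/
noncomputable def fNumCR {α : Type*} (M : Matroid α) (I Bs : Set α) (k : ℕ) : ℕ :=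
  {S : Set α | S ⊆ Bs ∧ M.Indep (S ∪ I) ∧ S.ncard = k}.ncard

/-- The `j`-th `h`-number of `(M/I)|_B`, where `d` is its rank:
`h_j = Σ_{k=0}^{j} (−1)^{j−k} binom(d−k, j−k) f_{k−1}`. -/
noncomputable def hNumCR {α : Type*} (M : Matroid α) (I Bs : Set α) (d j : ℕ) : ℤ :=
  ∑ k ∈ Finset.range (j + 1),
    (-1 : ℤ) ^ (j - k) * (Nat.choose (d - k) (j - k)) * (fNumCR M I Bs k : ℤ)

section Aux
set_option linter.unusedSectionVars false
set_option linter.constructorNameAsVariable false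
open Set Matroid

lemma wt_insert {α : Type*} [Fintype α] (ℓ : α → ℝ) {A : Set α} {y : α} (hy : y ∉ A) :
    wt ℓ (insert y A) = ℓ y + wt ℓ A := finsum_mem_insert _ hy (Set.toFinite A)

lemma wt_swap {α : Type*} [Fintype α] (ℓ : α → ℝ) {A : Set α} {x y : α}
    (hx : x ∈ A) (hy : y ∉ A) :
    wt ℓ (insert y (A \ {x})) = wt ℓ A + ℓ y - ℓ x := by
  have h1 : wt ℓ (insert y (A \ {x})) = ℓ y + wt ℓ (A \ {x}) :=
    wt_insert ℓ (fun h => hy h.1)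
  have h2 : wt ℓ A = ℓ x + wt ℓ (A \ {x}) := by
    have hA : A = insert x (A \ {x}) := by
      rw [Set.insert_diff_singleton, Set.insert_eq_of_mem hx]
    have hx' : x ∉ A \ {x} := fun h => h.2 rfl
    calc wt ℓ A = wt ℓ (insert x (A \ {x})) := by rw [← hA]
    _ = ℓ x + wt ℓ (A \ {x}) := wt_insert ℓ hx'
  rw [h1, h2]; ring

lemma choose_mul_choose (D J m : ℕ) (hm : m ≤ J) :
    (D.choose m) * ((D - m).choose (J - m)) = (D.choose J) * (J.choose m) := by
  rcases le_or_gt J D with h | h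
  · rw [Nat.choose_mul hm]
  · rw [Nat.choose_eq_zero_of_lt h, zero_mul]
    rcases le_or_gt m D with h2 | h2
    · rw [Nat.choose_eq_zero_of_lt (by omega : D - m < J - m), mul_zero]
    · rw [Nat.choose_eq_zero_of_lt h2, zero_mul]

lemma alt_sum (D J : ℕ) :
    ∑ m ∈ Finset.range (J + 1), (-1 : ℤ) ^ (J - m) * ((D - m).choose (J - m)) * (D.choose m)
      = if J = 0 then 1 else 0 := by
  have key : ∀ m ∈ Finset.range (J + 1),
      (-1 : ℤ) ^ (J - m) * ((D - m).choose (J - m)) * (D.choose m)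
        = (D.choose J : ℤ) * ((-1 : ℤ) ^ (J - m) * (J.choose m)) := by
    intro m hm
    rw [Finset.mem_range] at hm
    have := choose_mul_choose D J m (by omega)
    have : ((D.choose m) * ((D - m).choose (J - m)) : ℤ) = (D.choose J) * (J.choose m) := by
      exact_mod_cast congrArg (Nat.cast : ℕ → ℤ) this
    linear_combination ((-1 : ℤ) ^ (J - m)) * this
  rw [Finset.sum_congr rfl key, ← Finset.mul_sum]
  have refl : ∑ m ∈ Finset.range (J + 1), (-1 : ℤ) ^ (J - m) * (J.choose m)
      = ∑ m ∈ Finset.range (J + 1), (-1 : ℤ) ^ m * (J.choose m) := by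
    rw [← Finset.sum_range_reflect]
    refine Finset.sum_congr rfl ?_
    intro m hm
    rw [Finset.mem_range] at hm
    have h1 : J + 1 - 1 - m = J - m := by omega
    have h2 : J - (J - m) = m := by omega
    rw [h1, h2, Nat.choose_symm (by omega : m ≤ J)]
  rw [refl, Int.alternating_sum_range_choose]
  split
  · subst ‹J = 0›; simp
  · simp

lemma binom_alt (d a j : ℕ) (had : a ≤ d) :
    ∑ k ∈ Finset.range (j + 1), (-1 : ℤ) ^ (j - k) * ((d - k).choose (j - k)) *
        (if a ≤ k then (((d - a).choose (k - a) : ℕ) : ℤ) else 0)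
      = if a = j then 1 else 0 := by
  rcases le_or_gt a j with haj | haj
  · have hsplit := Finset.Ico_union_Ico_eq_Ico (Nat.zero_le a) (Nat.le_succ_of_le haj)
    rw [Finset.range_eq_Ico, ← hsplit,
      Finset.sum_union (Finset.Ico_disjoint_Ico_consecutive 0 a (j + 1))]
    have hzero : ∑ k ∈ Finset.Ico 0 a, (-1 : ℤ) ^ (j - k) * ((d - k).choose (j - k)) *
        (if a ≤ k then (((d - a).choose (k - a) : ℕ) : ℤ) else 0) = 0 := by
      refine Finset.sum_eq_zero ?_
      intro k hk
      rw [Finset.mem_Ico] at hk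
      rw [if_neg (by omega), mul_zero]
    rw [hzero, zero_add, Finset.sum_Ico_eq_sum_range]
    have hJ : j + 1 - a = (j - a) + 1 := by omega
    rw [hJ]
    have : ∀ m ∈ Finset.range ((j - a) + 1),
        (-1 : ℤ) ^ (j - (a + m)) * ((d - (a + m)).choose (j - (a + m))) *
          (if a ≤ a + m then ((((d - a).choose (a + m - a)) : ℕ) : ℤ) else 0)
        = (-1 : ℤ) ^ ((j - a) - m) * (((d - a) - m).choose ((j - a) - m)) * ((d - a).choose m) := by
      intro m hm
      rw [if_pos (by omega)]
      have e1 : j - (a + m) = (j - a) - m := by omega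
      have e2 : d - (a + m) = (d - a) - m := by omega
      have e3 : a + m - a = m := by omega
      rw [e1, e2, e3]
    rw [Finset.sum_congr rfl this, alt_sum]
    have : (a = j) ↔ (j - a = 0) := by omega
    simp [this]
  · have : ∀ k ∈ Finset.range (j + 1), (-1 : ℤ) ^ (j - k) * ((d - k).choose (j - k)) *
        (if a ≤ k then (((d - a).choose (k - a) : ℕ) : ℤ) else 0) = 0 := by
      intro k hk
      rw [Finset.mem_range] at hk
      rw [if_neg (by omega), mul_zero]
    rw [Finset.sum_eq_zero this, if_neg (by omega)]

lemma ncard_subsets {α : Type*} [Fintype α] (S : Set α) (m : ℕ) :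
    {U : Set α | U ⊆ S ∧ U.ncard = m}.ncard = S.ncard.choose m := by
  classical
  have himg : {U : Set α | U ⊆ S ∧ U.ncard = m}
      = (fun (t : Finset α) => (t : Set α)) '' ↑(S.toFinset.powersetCard m) := by
    ext U
    simp only [Set.mem_setOf_eq, Set.mem_image, Finset.mem_coe, Finset.mem_powersetCard]
    constructor
    · rintro ⟨hUS, hUm⟩
      refine ⟨U.toFinset, ⟨?_, ?_⟩, by simp⟩
      · intro x hx; rw [Set.mem_toFinset] at hx ⊢; exact hUS hx
      · rw [← Set.ncard_eq_toFinset_card']; exact hUm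
    · rintro ⟨t, ⟨hts, htm⟩, rfl⟩
      constructor
      · intro x hx
        have := hts (by simpa using hx)
        simpa using this
      · rw [Set.ncard_coe_finset]; exact htm
  rw [himg, Set.ncard_image_of_injective _ Finset.coe_injective, Set.ncard_coe_finset,
    Finset.card_powersetCard, Set.ncard_eq_toFinset_card']

lemma ncard_sandwich {α : Type*} [Fintype α] {R S : Set α} (hRS : R ⊆ S) (k : ℕ) :
    {T : Set α | R ⊆ T ∧ T ⊆ S ∧ T.ncard = k}.ncard
      = if R.ncard ≤ k then (S.ncard - R.ncard).choose (k - R.ncard) else 0 := by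
  classical
  split
  case isTrue hle =>
    have himg : {T : Set α | R ⊆ T ∧ T ⊆ S ∧ T.ncard = k}
        = (fun U => U ∪ R) '' {U : Set α | U ⊆ S \ R ∧ U.ncard = k - R.ncard} := by
      ext T
      simp only [Set.mem_setOf_eq, Set.mem_image]
      constructor
      · rintro ⟨hRT, hTS, hTk⟩
        refine ⟨T \ R, ⟨Set.diff_subset_diff_left hTS, ?_⟩, Set.diff_union_of_subset hRT⟩
        rw [Set.ncard_diff hRT (Set.toFinite R), hTk]
      · rintro ⟨U, ⟨hU, hUm⟩, rfl⟩
        have hdisj : Disjoint U R := Set.disjoint_of_subset_left hU disjoint_sdiff_left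
        refine ⟨Set.subset_union_right, Set.union_subset (hU.trans Set.diff_subset) hRS, ?_⟩
        rw [Set.ncard_union_eq hdisj (Set.toFinite U) (Set.toFinite R), hUm]
        omega
    rw [himg]
    have hinj : Set.InjOn (fun U => U ∪ R) {U : Set α | U ⊆ S \ R ∧ U.ncard = k - R.ncard} := by
      intro U1 h1 U2 h2 he
      have d1 : Disjoint U1 R := Set.disjoint_of_subset_left h1.1 disjoint_sdiff_left
      have d2 : Disjoint U2 R := Set.disjoint_of_subset_left h2.1 disjoint_sdiff_left
      have : (U1 ∪ R) \ R = (U2 ∪ R) \ R := by simp only at he; rw [he]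
      rwa [Set.union_diff_right, Set.union_diff_right, d1.sdiff_eq_left, d2.sdiff_eq_left] at this
    rw [Set.ncard_image_of_injOn hinj, ncard_subsets, Set.ncard_diff hRS (Set.toFinite R)]
  case isFalse hlt =>
    have : {T : Set α | R ⊆ T ∧ T ⊆ S ∧ T.ncard = k} = ∅ := by
      ext T
      simp only [Set.mem_setOf_eq, Set.mem_empty_iff_false, iff_false, not_and]
      intro hRT hTS hTk
      exact hlt (hTk ▸ Set.ncard_le_ncard hRT (Set.toFinite T))
    rw [this, Set.ncard_empty]

variable {α : Type*} [Fintype α] {M : Matroid α}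

lemma base_of_indep_ncard {r : ℕ} (hr : ∀ D, M.IsBase D → D.ncard = r)
    {X : Set α} (hX : M.Indep X) (hXr : X.ncard = r) : M.IsBase X := by
  obtain ⟨D, hD, hXD⟩ := hX.exists_isBase_superset
  have : X = D := Set.eq_of_subset_of_ncard_le hXD (by rw [hXr, hr D hD]) (Set.toFinite D)
  rwa [this]

lemma base_of_spanning_ncard (hE : M.E = Set.univ) {r : ℕ} (hr : ∀ D, M.IsBase D → D.ncard = r)
    {X : Set α} (hX : M.closure X = Set.univ) (hXr : X.ncard = r) : M.IsBase X := by
  have hsp : M.Spanning X := by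
    rw [Matroid.spanning_iff_closure_eq (by rw [hE]; exact Set.subset_univ X)]
    rw [hX, hE]
  obtain ⟨D, hD, hDX⟩ := hsp.exists_isBase_subset
  have : D = X := Set.eq_of_subset_of_ncard_le hDX (by rw [hXr, hr D hD]) (Set.toFinite X)
  rwa [← this]

lemma sym_exchange (hE : M.E = Set.univ) {r : ℕ} (hr : ∀ D, M.IsBase D → D.ncard = r)
    {A C : Set α} (hA : M.IsBase A) (hC : M.IsBase C)
    {e : α} (heA : e ∈ A) (heC : e ∉ C) :
    ∃ f ∈ C \ A, M.IsBase (insert f (A \ {e})) ∧ M.IsBase (insert e (C \ {f})) := by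
  classical
  have hground : ∀ X : Set α, X ⊆ M.E := by rw [hE]; exact fun X => Set.subset_univ X
  have hrpos : 1 ≤ r := by
    rw [← hr A hA]
    exact (Set.ncard_pos (Set.toFinite A)).mpr ⟨e, heA⟩
  -- e is in the closure of C
  have heclC : e ∈ M.closure C := by rw [hC.closure_eq, hE]; trivial
  -- pick a minimal subset C' of C whose closure contains e
  set 𝒮 : Set (Set α) := {X | X ⊆ C ∧ e ∈ M.closure X} with h𝒮
  have h𝒮ne : 𝒮.Nonempty := ⟨C, subset_rfl, heclC⟩
  obtain ⟨C', hC'mem, hC'min⟩ := Set.exists_min_image 𝒮 (fun X => X.ncard) (Set.toFinite 𝒮) h𝒮ne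
  obtain ⟨hC'C, heC'⟩ := hC'mem
  have hmin : ∀ f ∈ C', e ∉ M.closure (C' \ {f}) := by
    intro f hf hecl
    have hlt : (C' \ {f}).ncard < C'.ncard := Set.ncard_diff_singleton_lt_of_mem hf (Set.toFinite C')
    have := hC'min (C' \ {f}) ⟨(Set.diff_subset).trans hC'C, hecl⟩
    omega
  -- find f in C' outside the closure of A \ {e}
  have hnotallcl : ∃ f ∈ C', f ∉ M.closure (A \ {e}) := by
    by_contra h
    push_neg at h
    have hC'sub : C' ⊆ M.closure (A \ {e}) := h
    have : e ∈ M.closure (A \ {e}) := by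
      have h1 : M.closure C' ⊆ M.closure (M.closure (A \ {e})) :=
        M.closure_subset_closure hC'sub
      rw [M.closure_closure] at h1
      exact h1 heC'
    exact hA.indep.notMem_closure_sdiff_of_mem heA this
  obtain ⟨f, hfC', hfncl⟩ := hnotallcl
  have hfC : f ∈ C := hC'C hfC'
  have hfe : f ≠ e := fun h => heC (h ▸ hfC)
  have hfA : f ∉ A := by
    intro hfA
    exact hfncl (M.mem_closure_of_mem ⟨hfA, hfe⟩ (hground _))
  refine ⟨f, ⟨hfC, hfA⟩, ?_, ?_⟩
  · -- insert f (A \ {e}) is a base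
    have hind : M.Indep (insert f (A \ {e})) := by
      rw [(hA.indep.subset Set.diff_subset).insert_indep_iff_of_notMem (fun h => hfA h.1)]
      exact ⟨by rw [hE]; trivial, hfncl⟩
    refine base_of_indep_ncard hr hind ?_
    rw [Set.ncard_insert_of_notMem (fun h => hfA h.1) (Set.toFinite _),
      Set.ncard_diff_singleton_of_mem heA, hr A hA]
    omega
  · -- insert e (C \ {f}) is a base
    have hfexch : f ∈ M.closure (insert e (C' \ {f})) := by
      have h1 : e ∈ M.closure (insert f (C' \ {f})) \ M.closure (C' \ {f}) := by
        constructor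
        · rwa [Set.insert_diff_singleton, Set.insert_eq_of_mem hfC']
        · exact hmin f hfC'
      exact (Matroid.closure_exchange h1).1
    have hfcl : f ∈ M.closure (insert e (C \ {f})) :=
      M.closure_subset_closure
        (Set.insert_subset_insert (Set.diff_subset_diff_left hC'C)) hfexch
    have hsp : M.closure (insert e (C \ {f})) = Set.univ := by
      have h1 : M.closure (insert f (insert e (C \ {f}))) = M.closure (insert e (C \ {f})) :=
        Matroid.closure_insert_eq_of_mem_closure hfcl
      have h2 : C ⊆ insert f (insert e (C \ {f})) := by
        intro x hx
        rcases eq_or_ne x f with rfl | hxf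
        · exact Set.mem_insert _ _
        · exact Set.mem_insert_of_mem _ (Set.mem_insert_of_mem _ ⟨hx, hxf⟩)
      have h3 : M.closure C ⊆ M.closure (insert e (C \ {f})) := by
        rw [← h1]; exact M.closure_subset_closure h2
      rw [hC.closure_eq, hE] at h3
      exact Set.eq_univ_of_univ_subset h3
    refine base_of_spanning_ncard hE hr hsp ?_
    rw [Set.ncard_insert_of_notMem (fun h => heC h.1) (Set.toFinite _),
      Set.ncard_diff_singleton_of_mem hfC, hr C hC]
    omega

end Aux

section Shelling

variable {α : Type*} [Fintype α] {M : Matroid α} {n : ℕ} {B : Fin n → Set α} {ℓ : Fin n → α → ℝ}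

lemma earlier_of_lt_wt (hB : EnumeratesBases M B)
    (hwit : ∀ i j : Fin n, wt (ℓ i) (B j) < wt (ℓ i) (B i) ↔ j < i)
    {i : Fin n} {C : Set α} (hC : M.IsBase C) (hlt : wt (ℓ i) C < wt (ℓ i) (B i)) :
    ∃ k, k < i ∧ B k = C := by
  obtain ⟨k, hk⟩ := hB.2.2 C hC
  exact ⟨k, (hwit i k).mp (by rwa [hk]), hk⟩

/-- Pinnedness: every element of `B i \ B 0` is in the restriction set of `B i`. -/
lemma pin_subset_restriction (hE : M.E = Set.univ) {r : ℕ}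
    (hr : ∀ D, M.IsBase D → D.ncard = r) (hn : 0 < n)
    (hB : EnumeratesBases M B)
    (hwit : ∀ i j : Fin n, wt (ℓ i) (B j) < wt (ℓ i) (B i) ↔ j < i)
    (hpin : ∀ i : Fin n, ∀ C : Set α, M.IsBase C → C ≠ B ⟨0, hn⟩ →
      wt (ℓ i) (B ⟨0, hn⟩) < wt (ℓ i) C)
    (i : Fin n) : B i \ B ⟨0, hn⟩ ⊆ restrictionSet B i := by
  intro x hx
  obtain ⟨hxBi, hxB0⟩ := hx
  obtain ⟨f, ⟨hfB0, hfBi⟩, hbase1, hbase2⟩ :=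
    sym_exchange hE hr (hB.2.1 i) (hB.2.1 ⟨0, hn⟩) hxBi hxB0
  have hne : insert x (B ⟨0, hn⟩ \ {f}) ≠ B ⟨0, hn⟩ := by
    intro h
    exact hxB0 (h ▸ Set.mem_insert x _)
  have hlt := hpin i _ hbase2 hne
  rw [wt_swap (ℓ i) hfB0 hxB0] at hlt
  have hflt : ℓ i f < ℓ i x := by linarith
  have hlt2 : wt (ℓ i) (insert f (B i \ {x})) < wt (ℓ i) (B i) := by
    rw [wt_swap (ℓ i) hxBi hfBi]; linarith
  obtain ⟨k, hki, hkeq⟩ := earlier_of_lt_wt hB hwit hbase1 hlt2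
  exact ⟨hxBi, k, hki, by rw [hkeq]; exact (Set.subset_insert _ _)⟩

/-- Shelling step: if a subset of `B i` is contained in an earlier basis, some element
of the restriction set of `B i` avoids it. -/
lemma shelling_step (hE : M.E = Set.univ) {r : ℕ}
    (hr : ∀ D, M.IsBase D → D.ncard = r)
    (hB : EnumeratesBases M B)
    (hgen : ∀ i, Generic M (ℓ i))
    (hwit : ∀ i j : Fin n, wt (ℓ i) (B j) < wt (ℓ i) (B i) ↔ j < i)
    {i : Fin n} {G : Set α} (hGi : G ⊆ B i) {k : Fin n} (hk : k < i) (hGk : G ⊆ B k) :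
    ∃ x ∈ restrictionSet B i, x ∉ G := by
  classical
  set 𝒞 : Set (Set α) := {C | M.IsBase C ∧ G ⊆ C} with h𝒞
  have h𝒞ne : 𝒞.Nonempty := ⟨B k, hB.2.1 k, hGk⟩
  obtain ⟨C, ⟨hCbase, hGC⟩, hCmin⟩ :=
    Set.exists_min_image 𝒞 (fun X => wt (ℓ i) X) (Set.toFinite 𝒞) h𝒞ne
  have hCi : wt (ℓ i) C < wt (ℓ i) (B i) := by
    have h1 : wt (ℓ i) C ≤ wt (ℓ i) (B k) := hCmin (B k) ⟨hB.2.1 k, hGk⟩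
    have h2 : wt (ℓ i) (B k) < wt (ℓ i) (B i) := (hwit i k).mpr hk
    linarith
  have hCne : B i ≠ C := by
    intro h; rw [← h] at hCi; exact lt_irrefl _ hCi
  have hex : ∃ e, e ∈ B i ∧ e ∉ C := by
    by_contra h
    push_neg at h
    exact hCne ((hB.2.1 i).eq_of_subset_isBase hCbase h)
  obtain ⟨e, heBi, heC⟩ := hex
  have heG : e ∉ G := fun h => heC (hGC h)
  obtain ⟨f, ⟨hfC, hfBi⟩, hbase1, hbase2⟩ :=
    sym_exchange hE hr (hB.2.1 i) hCbase heBi heC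
  have hfG : f ∉ G := fun h => hfBi (hGi h)
  have hGC' : G ⊆ insert e (C \ {f}) := by
    intro y hy
    exact Set.mem_insert_of_mem _ ⟨hGC hy, fun h => hfG (h ▸ hy)⟩
  have hC'ne : insert e (C \ {f}) ≠ C := by
    intro h
    exact heC (h ▸ Set.mem_insert e _)
  have hlt : wt (ℓ i) C < wt (ℓ i) (insert e (C \ {f})) := by
    have hle := hCmin _ ⟨hbase2, hGC'⟩
    have hne := (hgen i).2 hbase2 hCbase hC'ne
    rcases lt_or_eq_of_le hle with h | h
    · exact h
    · exact absurd h.symm hne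
  rw [wt_swap (ℓ i) hfC heC] at hlt
  have hflt : ℓ i f < ℓ i e := by linarith
  have hlt2 : wt (ℓ i) (insert f (B i \ {e})) < wt (ℓ i) (B i) := by
    rw [wt_swap (ℓ i) heBi hfBi]; linarith
  obtain ⟨m, hmi, hmeq⟩ := earlier_of_lt_wt hB hwit hbase1 hlt2
  exact ⟨e, ⟨heBi, m, hmi, by rw [hmeq]; exact Set.subset_insert _ _⟩, heG⟩

/-- Partition property. -/
lemma partition_unique (hE : M.E = Set.univ) {r : ℕ}
    (hr : ∀ D, M.IsBase D → D.ncard = r)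
    (hB : EnumeratesBases M B)
    (hgen : ∀ i, Generic M (ℓ i))
    (hwit : ∀ i j : Fin n, wt (ℓ i) (B j) < wt (ℓ i) (B i) ↔ j < i)
    {G : Set α} (hex : ∃ i, G ⊆ B i) :
    ∃! i : Fin n, restrictionSet B i ⊆ G ∧ G ⊆ B i := by
  classical
  set s : Finset (Fin n) := Finset.univ.filter (fun i => G ⊆ B i) with hs
  have hsne : s.Nonempty := by
    obtain ⟨i, hi⟩ := hex
    exact ⟨i, by simp [hs, hi]⟩
  obtain ⟨i, his, himin⟩ := Finset.exists_min_image s id hsne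
  have hGi : G ⊆ B i := by simpa [hs] using his
  refine ⟨i, ⟨?_, hGi⟩, ?_⟩
  · -- restrictionSet B i ⊆ G by minimality
    intro x hx
    by_contra hxG
    obtain ⟨hxBi, k, hki, hsub⟩ := hx
    have hGk : G ⊆ B k := fun y hy => hsub ⟨hGi hy, fun h => hxG (h ▸ hy)⟩
    have : i ≤ k := himin k (by simp [hs, hGk])
    exact absurd hki (not_lt.mpr this)
  · -- uniqueness
    intro m ⟨hRm, hGm⟩
    by_contra hne
    rcases lt_trichotomy i m with h | h | h
    · obtain ⟨x, hx, hxG⟩ := shelling_step hE hr hB hgen hwit hGm h hGi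
      exact hxG (hRm hx)
    · exact hne h.symm
    · have : i ≤ m := himin m (by simp [hs, hGm])
      exact absurd h (not_lt.mpr this)

end Shelling

theorem pinned_broken_line_h_vector_decomposition {α : Type*} [Fintype α]
    (M : Matroid α) (hE : M.E = Set.univ)
    (r : ℕ) (hr : ∀ C : Set α, M.IsBase C → C.ncard = r)
    {n : ℕ} (hn : 0 < n) (B : Fin n → Set α) (hB : EnumeratesBases M B)
    (ℓ : Fin n → α → ℝ) (hgen : ∀ i, Generic M (ℓ i))
    (hwit : ∀ i j : Fin n, wt (ℓ i) (B j) < wt (ℓ i) (B i) ↔ j < i)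
    (hpin : ∀ i : Fin n, ∀ C : Set α, M.IsBase C → C ≠ B ⟨0, hn⟩ →
      wt (ℓ i) (B ⟨0, hn⟩) < wt (ℓ i) C)
    (I : Set α) (hI : M.Indep I) (hIB : I ∩ B ⟨0, hn⟩ = ∅) (j : ℕ) :
    ({i : Fin n | B i \ B ⟨0, hn⟩ = I ∧
        (restrictionSet B i).ncard = I.ncard + j}.ncard : ℤ)
      = hNumCR M I (B ⟨0, hn⟩) (r - I.ncard) j := by
  classical
  have hBase : ∀ i, M.IsBase (B i) := hB.2.1
  set B0 : Set α := B ⟨0, hn⟩ with hB0def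
  have hB0 : M.IsBase B0 := hBase _
  obtain ⟨BI, hBIbase, hIBI⟩ := hI.exists_isBase_superset
  have hIr : I.ncard ≤ r := by
    rw [← hr BI hBIbase]; exact Set.ncard_le_ncard hIBI (Set.toFinite BI)
  set d : ℕ := r - I.ncard with hd
  have hpinR : ∀ i : Fin n, B i \ B0 ⊆ restrictionSet B i :=
    pin_subset_restriction hE hr hn hB hwit hpin
  have hInotB0 : ∀ x, x ∈ I → x ∉ B0 := by
    intro x hxI hxB0
    have : x ∈ I ∩ B0 := ⟨hxI, hxB0⟩
    rw [hIB] at this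
    exact this
  have hIdisj : ∀ X : Set α, X ⊆ B0 → Disjoint I X :=
    fun X hX => Set.disjoint_left.mpr (fun x hxI hxX => hInotB0 x hxI (hX hxX))
  have keyR : ∀ i : Fin n, B i \ B0 = I →
      restrictionSet B i = I ∪ (restrictionSet B i ∩ B0) := by
    intro i hiI
    apply Set.Subset.antisymm
    · intro x hx
      by_cases hxB0 : x ∈ B0
      · exact Or.inr ⟨hx, hxB0⟩
      · exact Or.inl (hiI ▸ ⟨hx.1, hxB0⟩)
    · refine Set.union_subset ?_ Set.inter_subset_left
      rw [← hiI]; exact hpinR i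
  have keyCard : ∀ i : Fin n, B i \ B0 = I →
      (restrictionSet B i).ncard = I.ncard + (restrictionSet B i ∩ B0).ncard := by
    intro i hiI
    conv_lhs => rw [keyR i hiI]
    rw [Set.ncard_union_eq (hIdisj _ Set.inter_subset_right) (Set.toFinite I) (Set.toFinite _)]
  have keyS : ∀ i : Fin n, B i \ B0 = I → (B i ∩ B0).ncard = d := by
    intro i hiI
    have h1 : B i = I ∪ (B i ∩ B0) := by
      conv_lhs => rw [← Set.diff_union_inter (B i) B0, hiI]
    have h2 : r = I.ncard + (B i ∩ B0).ncard := by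
      rw [← hr (B i) (hBase i)]
      conv_lhs => rw [h1]
      exact Set.ncard_union_eq (hIdisj _ Set.inter_subset_right) (Set.toFinite I)
        (Set.toFinite _)
    omega
  have keyRS : ∀ i : Fin n, restrictionSet B i ∩ B0 ⊆ B i ∩ B0 :=
    fun i => Set.inter_subset_inter_left _ (fun x hx => hx.1)
  have keyad : ∀ i : Fin n, B i \ B0 = I → (restrictionSet B i ∩ B0).ncard ≤ d := by
    intro i hiI
    rw [← keyS i hiI]
    exact Set.ncard_le_ncard (keyRS i) (Set.toFinite _)
  -- the partition of the faces
  have hpart : ∀ T : Set α, T ⊆ B0 → M.Indep (T ∪ I) →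
      ∃! i : Fin n, restrictionSet B i ⊆ T ∪ I ∧ T ∪ I ⊆ B i := by
    intro T hT hTI
    apply partition_unique hE hr hB hgen hwit
    obtain ⟨B', hB'base, hsub, _⟩ := hTI.exists_isBase_subset_union_isBase hB0
    obtain ⟨k, hk⟩ := hB.2.2 B' hB'base
    exact ⟨k, by rw [hk]; exact hsub⟩
  let idx : Set α → Fin n := fun T =>
    if h : T ⊆ B0 ∧ M.Indep (T ∪ I) then (hpart T h.1 h.2).choose else ⟨0, hn⟩
  have idx_spec : ∀ T : Set α, T ⊆ B0 → M.Indep (T ∪ I) →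
      (restrictionSet B (idx T) ⊆ T ∪ I ∧ T ∪ I ⊆ B (idx T)) ∧
        ∀ m : Fin n, (restrictionSet B m ⊆ T ∪ I ∧ T ∪ I ⊆ B m) → m = idx T := by
    intro T h1 h2
    have hcond : T ⊆ B0 ∧ M.Indep (T ∪ I) := ⟨h1, h2⟩
    have hspec := (hpart T h1 h2).choose_spec
    simp only [idx, dif_pos hcond]
    exact hspec
  have idx_mem : ∀ T : Set α, T ⊆ B0 → M.Indep (T ∪ I) →
      B (idx T) \ B0 = I ∧ restrictionSet B (idx T) ∩ B0 ⊆ T ∧ T ⊆ B (idx T) ∩ B0 := by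
    intro T h1 h2
    obtain ⟨⟨hR, hsub⟩, _⟩ := idx_spec T h1 h2
    have hIBidx : B (idx T) \ B0 = I := by
      apply Set.Subset.antisymm
      · intro x hx
        have hxR := hpinR (idx T) hx
        rcases hR hxR with hxT | hxI
        · exact absurd (h1 hxT) hx.2
        · exact hxI
      · intro x hxI
        exact ⟨hsub (Or.inr hxI), hInotB0 x hxI⟩
    refine ⟨hIBidx, ?_, Set.subset_inter (fun x hx => hsub (Or.inl hx)) h1⟩
    intro x hx
    rcases hR hx.1 with hxT | hxI
    · exact hxT
    · exact absurd hx.2 (fun h => hInotB0 x hxI h)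
  have idx_eq : ∀ (i : Fin n) (T : Set α), B i \ B0 = I →
      restrictionSet B i ∩ B0 ⊆ T → T ⊆ B i ∩ B0 → idx T = i := by
    intro i T hiI hRT hTS
    have hT0 : T ⊆ B0 := hTS.trans Set.inter_subset_right
    have hTIind : M.Indep (T ∪ I) := by
      apply (hBase i).indep.subset
      refine Set.union_subset (hTS.trans Set.inter_subset_left) ?_
      rw [← hiI]; exact Set.diff_subset
    obtain ⟨_, huniq⟩ := idx_spec T hT0 hTIind
    refine (huniq i ⟨?_, ?_⟩).symm
    · rw [keyR i hiI]
      exact Set.union_subset (Set.subset_union_right)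
        (fun x hx => Or.inl (hRT hx))
    · refine Set.union_subset (hTS.trans Set.inter_subset_left) ?_
      rw [← hiI]; exact Set.diff_subset
  set ι : Finset (Fin n) := Finset.univ.filter (fun i => B i \ B0 = I) with hι
  -- Step A: fiberwise count of independent sets
  have stepA : ∀ k : ℕ, fNumCR M I B0 k
      = ∑ i ∈ ι, (if (restrictionSet B i ∩ B0).ncard ≤ k then
          (d - (restrictionSet B i ∩ B0).ncard).choose (k - (restrictionSet B i ∩ B0).ncard)
        else 0) := by
    intro k
    have h1 : fNumCR M I B0 k
        = (Set.toFinite {T : Set α | T ⊆ B0 ∧ M.Indep (T ∪ I) ∧ T.ncard = k}).toFinset.card := by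
      rw [fNumCR, Set.ncard_eq_toFinset_card]
    rw [h1, Finset.card_eq_sum_card_fiberwise (f := idx) (t := ι) (fun T hT => by
      rw [Finset.mem_coe, Set.Finite.mem_toFinset] at hT
      obtain ⟨h1', h2', _⟩ := hT
      simp only [hι, Finset.coe_filter, Finset.mem_filter, Finset.mem_univ, true_and]
      exact (idx_mem T h1' h2').1)]
    refine Finset.sum_congr rfl ?_
    intro i hi
    rw [hι, Finset.mem_filter] at hi
    have hiI := hi.2
    have hfib : Finset.filter (fun T => idx T = i)
          (Set.toFinite {T : Set α | T ⊆ B0 ∧ M.Indep (T ∪ I) ∧ T.ncard = k}).toFinset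
        = (Set.toFinite {T : Set α | restrictionSet B i ∩ B0 ⊆ T ∧ T ⊆ B i ∩ B0 ∧
            T.ncard = k}).toFinset := by
      ext T
      simp only [Finset.mem_filter, Set.Finite.mem_toFinset, Set.mem_setOf_eq]
      constructor
      · rintro ⟨⟨h1', h2', h3'⟩, hidx⟩
        obtain ⟨_, hRT, hTS⟩ := idx_mem T h1' h2'
        exact ⟨hidx ▸ hRT, hidx ▸ hTS, h3'⟩
      · rintro ⟨hRT, hTS, h3'⟩
        have hT0 : T ⊆ B0 := hTS.trans Set.inter_subset_right
        have hind : M.Indep (T ∪ I) := (hBase i).indep.subset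
          (Set.union_subset (hTS.trans Set.inter_subset_left)
            (by rw [← hiI]; exact Set.diff_subset))
        exact ⟨⟨hT0, hind, h3'⟩, idx_eq i T hiI hRT hTS⟩
    rw [hfib, ← Set.ncard_eq_toFinset_card, ncard_sandwich (keyRS i) k, keyS i hiI]
  -- Step B: h-number as an indicator sum
  have stepB : hNumCR M I B0 d j
      = ∑ i ∈ ι, (if (restrictionSet B i ∩ B0).ncard = j then (1 : ℤ) else 0) := by
    rw [hNumCR]
    have hterm : ∀ k ∈ Finset.range (j + 1),
        (-1 : ℤ) ^ (j - k) * ((d - k).choose (j - k)) * (fNumCR M I B0 k : ℤ)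
        = ∑ i ∈ ι, (-1 : ℤ) ^ (j - k) * ((d - k).choose (j - k)) *
            (if (restrictionSet B i ∩ B0).ncard ≤ k then
              (((d - (restrictionSet B i ∩ B0).ncard).choose
                (k - (restrictionSet B i ∩ B0).ncard) : ℕ) : ℤ) else 0) := by
      intro k _
      rw [stepA k, Nat.cast_sum, Finset.mul_sum]
      refine Finset.sum_congr rfl ?_
      intro i _
      rw [Nat.cast_ite, Nat.cast_zero]
    rw [Finset.sum_congr rfl hterm, Finset.sum_comm]
    refine Finset.sum_congr rfl ?_
    intro i hi
    rw [hι, Finset.mem_filter] at hi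
    exact binom_alt d _ j (keyad i hi.2)
  -- Step C: the left-hand side as the same indicator sum
  have hLHS : {i : Fin n | B i \ B0 = I ∧ (restrictionSet B i).ncard = I.ncard + j}
      = ↑(ι.filter (fun i => (restrictionSet B i ∩ B0).ncard = j)) := by
    ext i
    simp only [Set.mem_setOf_eq, Finset.coe_filter, Finset.mem_filter, Finset.mem_univ,
      true_and, hι, Set.mem_setOf_eq]
    constructor
    · rintro ⟨h1, h2⟩
      have := keyCard i h1
      exact ⟨h1, by omega⟩
    · rintro ⟨h1, h2⟩
      have := keyCard i h1
      exact ⟨h1, by omega⟩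
  rw [hLHS, Set.ncard_coe_finset, stepB, Finset.sum_boole]
end
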